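/- arXiv:2502.16649 — 4 statements merged into one kernel-verified Lean document; each statement's English description precedes it below -/
import Mathlib

section
/- Let φ : (−1,1) → ℝ be continuous, strictly increasing and surjective onto ℝ with φ(0) = 0, and set Φ(z) = ∫₀ᶻ φ(s) ds. Then Φ(z) ≥ 0 for all z ∈ (−1,1), and for every δ > 0, letting b₊, b₋ ∈ (−1,1) be the unique points with φ(b₊) = 1/δ and φ(b₋) = −1/δ, one has |z| ≤ δ·Φ(z) + max(b₊, −b₋) for every z ∈ (−1,1). -/
/-- **Bounding `|z|` by the energy `Φ(z)` (Remark 2.4).**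
Let `φ : (−1,1) → ℝ` be continuous, strictly increasing and surjective onto `ℝ` with
`φ 0 = 0`, and set `Φ z = ∫ s in 0..z, φ s`. Then `Φ z ≥ 0` on `(−1,1)`, and for every
`δ > 0`, if `b₊, b₋ ∈ (−1,1)` are the (unique) points with `φ b₊ = 1/δ` and
`φ b₋ = −1/δ`, then `|z| ≤ δ * Φ z + max b₊ (−b₋)` for all `z ∈ (−1,1)`. -/
theorem stmt_1 (φ : ℝ → ℝ)
    (hc : ContinuousOn φ (Set.Ioo (-1 : ℝ) 1))
    (hm : StrictMonoOn φ (Set.Ioo (-1 : ℝ) 1))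
    (hsurj : ∀ c : ℝ, ∃ b ∈ Set.Ioo (-1 : ℝ) 1, φ b = c)
    (h0 : φ 0 = 0) :
    (∀ z ∈ Set.Ioo (-1 : ℝ) 1, 0 ≤ ∫ s in (0 : ℝ)..z, φ s) ∧
    ∀ δ : ℝ, 0 < δ →
      ∀ bp ∈ Set.Ioo (-1 : ℝ) 1, ∀ bm ∈ Set.Ioo (-1 : ℝ) 1,
        φ bp = 1 / δ → φ bm = -(1 / δ) →
        ∀ z ∈ Set.Ioo (-1 : ℝ) 1,
          |z| ≤ δ * (∫ s in (0 : ℝ)..z, φ s) + max bp (-bm) := by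
  have h0mem : (0:ℝ) ∈ Set.Ioo (-1:ℝ) 1 := by norm_num
  have hint : ∀ a ∈ Set.Ioo (-1:ℝ) 1, ∀ b ∈ Set.Ioo (-1:ℝ) 1,
      IntervalIntegrable φ MeasureTheory.volume a b := by
    intro a ha b hb
    exact (hc.mono (Set.ordConnected_Ioo.uIcc_subset ha hb)).intervalIntegrable
  have key : ∀ z ∈ Set.Ioo (-1:ℝ) 1, 0 ≤ ∫ s in (0:ℝ)..z, φ s := by
    intro z hz
    rcases le_or_gt 0 z with h | h
    · apply intervalIntegral.integral_nonneg h
      intro u hu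
      have hu_mem : u ∈ Set.Ioo (-1:ℝ) 1 :=
        ⟨lt_of_lt_of_le (by norm_num) hu.1, lt_of_le_of_lt hu.2 hz.2⟩
      have := hm.monotoneOn h0mem hu_mem hu.1
      linarith
    · rw [intervalIntegral.integral_symm z 0]
      have hle : (∫ s in z..(0:ℝ), φ s) ≤ ∫ s in z..(0:ℝ), (0:ℝ) := by
        apply intervalIntegral.integral_mono_on h.le (hint z hz 0 h0mem)
          intervalIntegrable_const
        intro u hu
        have hu_mem : u ∈ Set.Ioo (-1:ℝ) 1 :=
          ⟨lt_of_lt_of_le hz.1 hu.1, lt_of_le_of_lt hu.2 (by norm_num)⟩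
        have := hm.monotoneOn hu_mem h0mem hu.2
        linarith
      simp only [intervalIntegral.integral_const, smul_eq_mul, mul_zero] at hle
      linarith
  refine ⟨key, ?_⟩
  intro δ hδ bp hbp bm hbm hφp hφm z hz
  have hδ' : (0:ℝ) < 1/δ := by positivity
  have hbp0 : 0 < bp := by
    by_contra hcon
    push_neg at hcon
    have := hm.monotoneOn hbp h0mem hcon
    rw [hφp, h0] at this; linarith
  have hbm0 : bm < 0 := by
    by_contra hcon
    push_neg at hcon
    have := hm.monotoneOn h0mem hbm hcon
    rw [hφm, h0] at this; linarith
  rcases le_or_gt 0 z with hz0 | hz0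
  · rw [abs_of_nonneg hz0]
    rcases le_or_gt z bp with h | h
    · have h1 := key z hz
      have h2 := le_max_left bp (-bm)
      nlinarith
    · have split : (∫ s in (0:ℝ)..bp, φ s) + (∫ s in bp..z, φ s)
          = ∫ s in (0:ℝ)..z, φ s :=
        intervalIntegral.integral_add_adjacent_intervals
          (hint 0 h0mem bp hbp) (hint bp hbp z hz)
      have hconst : (∫ s in bp..z, (1/δ : ℝ)) ≤ ∫ s in bp..z, φ s := by
        apply intervalIntegral.integral_mono_on h.le
          intervalIntegrable_const (hint bp hbp z hz)
        intro u hu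
        have hu_mem : u ∈ Set.Ioo (-1:ℝ) 1 :=
          ⟨lt_of_lt_of_le hbp.1 hu.1, lt_of_le_of_lt hu.2 hz.2⟩
        have := hm.monotoneOn hbp hu_mem hu.1
        rw [hφp] at this; exact this
      rw [intervalIntegral.integral_const, smul_eq_mul] at hconst
      have hΦbp := key bp hbp
      have h2 := le_max_left bp (-bm)
      have hd : δ * ((z - bp) * (1/δ)) = z - bp := by field_simp
      nlinarith
  · rw [abs_of_neg hz0]
    rcases le_or_gt bm z with h | h
    · have h1 := key z hz
      have h2 := le_max_right bp (-bm)
      nlinarith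
    · have split : (∫ s in (0:ℝ)..bm, φ s) + (∫ s in bm..z, φ s)
          = ∫ s in (0:ℝ)..z, φ s :=
        intervalIntegral.integral_add_adjacent_intervals
          (hint 0 h0mem bm hbm) (hint bm hbm z hz)
      have hconst : (∫ s in z..bm, φ s) ≤ ∫ s in z..bm, (-(1/δ) : ℝ) := by
        apply intervalIntegral.integral_mono_on h.le
          (hint z hz bm hbm) intervalIntegrable_const
        intro u hu
        have hu_mem : u ∈ Set.Ioo (-1:ℝ) 1 :=
          ⟨lt_of_lt_of_le hz.1 hu.1, lt_of_le_of_lt hu.2 hbm.2⟩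
        have := hm.monotoneOn hu_mem hbm hu.2
        rw [hφm] at this; exact this
      rw [intervalIntegral.integral_const, smul_eq_mul] at hconst
      have hsymm : (∫ s in bm..z, φ s) = -(∫ s in z..bm, φ s) :=
        intervalIntegral.integral_symm z bm
      have hΦbm := key bm hbm
      have h2 := le_max_right bp (-bm)
      have hd : δ * ((bm - z) * (-(1/δ))) = -(bm - z) := by field_simp
      nlinarith
end

section
/- Let (Ω, μ) be a finite measure space with 0 < μ(Ω) < ∞, and let φ : [0,1) → ℝ be continuous, convex, monotone increasing with φ(0) = 0. Let w₁, w₂ : Ω → [0,1) be measurable functions such that φ∘w₁ and φ∘w₂ are μ-integrable. Then the average ⨍_Ω |w₁ − w₂| dμ lies in [0,1) and φ(⨍_Ω |w₁ − w₂| dμ) ≤ ⨍_Ω |φ(w₁) − φ(w₂)| dμ, where ⨍_Ω f dμ = (1/μ(Ω)) ∫_Ω f dμ denotes the averaged integral. -/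
open MeasureTheory

/-- Superadditivity estimate: `φ(|a−b|) ≤ |φ(a)−φ(b)|` for a convex, monotone `φ` with
`φ 0 = 0` on `[0,1)`. -/
lemma stmt_4_superadd (φ : ℝ → ℝ) (hconv : ConvexOn ℝ (Set.Ico (0:ℝ) 1) φ)
    (hmono : MonotoneOn φ (Set.Ico (0:ℝ) 1)) (h0 : φ 0 = 0)
    (a b : ℝ) (ha : a ∈ Set.Ico (0:ℝ) 1) (hb : b ∈ Set.Ico (0:ℝ) 1) :
    φ |a - b| ≤ |φ a - φ b| := by
  wlog hba : b ≤ a generalizing a b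
  · rw [abs_sub_comm, abs_sub_comm (φ a)]; exact this b a hb ha (le_of_not_ge hba)
  have hφb : φ b ≤ φ a := hmono hb ha hba
  rw [abs_of_nonneg (by linarith), abs_of_nonneg (by linarith)]
  rcases eq_or_lt_of_le ha.1 with h | hapos
  · have : b = 0 := le_antisymm (hba.trans h.symm.le) hb.1
    simp [← h, this, h0]
  · set θ := b / a with hθ
    have hθ0 : 0 ≤ θ := div_nonneg hb.1 hapos.le
    have hθ1 : θ ≤ 1 := div_le_one_of_le₀ hba hapos.le
    have h01 : (0:ℝ) ∈ Set.Ico (0:ℝ) 1 := ⟨le_refl _, one_pos⟩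
    have h1 : φ ((1 - θ) * a + θ * 0) ≤ (1 - θ) * φ a + θ * φ 0 :=
      hconv.2 ha h01 (by linarith) hθ0 (by ring)
    have h2 : φ (θ * a + (1 - θ) * 0) ≤ θ * φ a + (1 - θ) * φ 0 :=
      hconv.2 ha h01 hθ0 (by linarith) (by ring)
    have e1 : (1 - θ) * a + θ * 0 = a - b := by
      rw [hθ, mul_zero, add_zero, sub_mul, one_mul, div_mul_cancel₀ b hapos.ne']
    have e2 : θ * a + (1 - θ) * 0 = b := by
      rw [hθ, mul_zero, add_zero, div_mul_cancel₀ b hapos.ne']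
    rw [e1, h0] at h1
    rw [e2, h0] at h2
    linarith

/-- Supporting line for a convex function on `[0,1)` at an interior point. -/
lemma stmt_4_support_line (φ : ℝ → ℝ) (hconv : ConvexOn ℝ (Set.Ico (0:ℝ) 1) φ)
    (m : ℝ) (hm : m ∈ Set.Ioo (0:ℝ) 1) :
    ∃ c : ℝ, ∀ t ∈ Set.Ico (0:ℝ) 1, φ m + c * (t - m) ≤ φ t := by
  obtain ⟨hm0, hm1⟩ := hm
  set T : Set ℝ := (fun t => (φ m - φ t) / (m - t)) '' Set.Ico 0 m with hT
  have hne : T.Nonempty := ⟨_, ⟨0, ⟨le_refl _, hm0⟩, rfl⟩⟩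
  set u₀ : ℝ := (m + 1) / 2 with hu₀
  have hu₀m : m < u₀ := by simp only [hu₀]; linarith
  have hu₀1 : u₀ < 1 := by simp only [hu₀]; linarith
  have hTle : ∀ u ∈ Set.Ioo m 1, ∀ y ∈ T, y ≤ (φ u - φ m) / (u - m) := by
    rintro u ⟨hum, hu1⟩ y ⟨t, ⟨ht0, htm⟩, rfl⟩
    exact hconv.slope_mono_adjacent ⟨ht0, htm.trans hm1⟩ ⟨(hm0.trans hum).le, hu1⟩ htm hum
  have hbdd : BddAbove T := ⟨_, fun y hy => hTle u₀ ⟨hu₀m, hu₀1⟩ y hy⟩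
  set c := sSup T with hc
  refine ⟨c, fun t ⟨ht0, ht1⟩ => ?_⟩
  rcases lt_trichotomy t m with h | h | h
  · have hle : (φ m - φ t) / (m - t) ≤ c := le_csSup hbdd ⟨t, ⟨ht0, h⟩, rfl⟩
    have hmt : 0 < m - t := by linarith
    rw [div_le_iff₀ hmt] at hle
    nlinarith
  · simp [h]
  · have hge : c ≤ (φ t - φ m) / (t - m) := csSup_le hne (hTle t ⟨h, ht1⟩)
    have htm : 0 < t - m := by linarith
    rw [le_div_iff₀ htm] at hge
    nlinarith

/-- **Jensen-type inequality for the averaged integral (key step in Theorem 3.4).**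
Let `(Ω, μ)` be a finite measure space with `0 < μ(Ω) < ∞` and let `φ : [0,1) → ℝ` be
continuous, convex and monotone increasing on `[0,1)` with `φ 0 = 0`. If
`w₁, w₂ : Ω → [0,1)` are measurable with `φ ∘ w₁` and `φ ∘ w₂` integrable, then the
average `⨍ |w₁ − w₂| dμ` lies in `[0,1)` and
`φ (⨍ |w₁ − w₂| dμ) ≤ ⨍ |φ(w₁) − φ(w₂)| dμ`. -/
theorem stmt_4 {Ω : Type*} [MeasurableSpace Ω] (μ : Measure Ω)
    [IsFiniteMeasure μ] (hpos : 0 < μ Set.univ)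
    (φ : ℝ → ℝ)
    (hφc : ContinuousOn φ (Set.Ico (0 : ℝ) 1))
    (hconv : ConvexOn ℝ (Set.Ico (0 : ℝ) 1) φ)
    (hmono : MonotoneOn φ (Set.Ico (0 : ℝ) 1))
    (h0 : φ 0 = 0)
    (w₁ w₂ : Ω → ℝ) (hm₁ : Measurable w₁) (hm₂ : Measurable w₂)
    (hr₁ : ∀ x, w₁ x ∈ Set.Ico (0 : ℝ) 1) (hr₂ : ∀ x, w₂ x ∈ Set.Ico (0 : ℝ) 1)
    (hi₁ : Integrable (fun x => φ (w₁ x)) μ)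
    (hi₂ : Integrable (fun x => φ (w₂ x)) μ) :
    (⨍ x, |w₁ x - w₂ x| ∂μ) ∈ Set.Ico (0 : ℝ) 1 ∧
      φ (⨍ x, |w₁ x - w₂ x| ∂μ) ≤ ⨍ x, |φ (w₁ x) - φ (w₂ x)| ∂μ := by
  set g : Ω → ℝ := fun x => |w₁ x - w₂ x| with hg
  have hg_mem : ∀ x, g x ∈ Set.Ico (0:ℝ) 1 := fun x => by
    refine ⟨abs_nonneg _, abs_lt.2 ⟨?_, ?_⟩⟩
    · have := (hr₁ x).1; have := (hr₂ x).2; linarith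
    · have := (hr₁ x).2; have := (hr₂ x).1; linarith
  have hgm : Measurable g := (hm₁.sub hm₂).abs
  have hgint : Integrable g μ := by
    refine (integrable_const (1:ℝ)).mono' hgm.aestronglyMeasurable ?_
    exact Filter.Eventually.of_forall fun x => by
      rw [Real.norm_eq_abs, abs_of_nonneg (hg_mem x).1]; exact (hg_mem x).2.le
  -- measurability of φ ∘ g
  have hφg_meas : Measurable fun x => φ (g x) := by
    have hres : Continuous ((Set.Ico (0:ℝ) 1).restrict φ) :=
      continuousOn_iff_continuous_restrict.mp hφc
    have hsub : Measurable fun x => (⟨g x, hg_mem x⟩ : Set.Ico (0:ℝ) 1) :=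
      hgm.subtype_mk
    exact hres.measurable.comp hsub
  -- pointwise bounds
  have hφg_nonneg : ∀ x, 0 ≤ φ (g x) := fun x => by
    have := hmono ⟨le_refl 0, one_pos⟩ (hg_mem x) (hg_mem x).1
    linarith [h0 ▸ this]
  have hptwise : ∀ x, φ (g x) ≤ |φ (w₁ x) - φ (w₂ x)| := fun x =>
    stmt_4_superadd φ hconv hmono h0 _ _ (hr₁ x) (hr₂ x)
  have hhint : Integrable (fun x => |φ (w₁ x) - φ (w₂ x)|) μ := (hi₁.sub hi₂).abs
  have hφgint : Integrable (fun x => φ (g x)) μ := by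
    refine hhint.mono' hφg_meas.aestronglyMeasurable ?_
    exact Filter.Eventually.of_forall fun x => by
      rw [Real.norm_eq_abs, abs_of_nonneg (hφg_nonneg x)]
      exact hptwise x
  have hMpos : 0 < (μ Set.univ).toReal := ENNReal.toReal_pos hpos.ne' (measure_ne_top μ _)
  have havg : (⨍ x, g x ∂μ) = (μ Set.univ).toReal⁻¹ * ∫ x, g x ∂μ := by
    rw [average_eq]; rfl
  have hintg_nonneg : 0 ≤ ∫ x, g x ∂μ := integral_nonneg fun x => (hg_mem x).1
  have hm0 : 0 ≤ ⨍ x, g x ∂μ := by rw [havg]; positivity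
  -- average < 1
  have hfint : Integrable (fun x => (1:ℝ) - g x) μ := (integrable_const 1).sub hgint
  have hm1 : (⨍ x, g x ∂μ) < 1 := by
    have hpos' : 0 < ∫ x, ((1:ℝ) - g x) ∂μ := by
      rw [integral_pos_iff_support_of_nonneg
        (fun x => sub_nonneg.2 (hg_mem x).2.le) hfint]
      have hs : Function.support (fun x => (1:ℝ) - g x) = Set.univ := by
        ext x; simp only [Function.mem_support, Set.mem_univ, iff_true]
        have := (hg_mem x).2; intro hcontra; linarith [sub_eq_zero.mp hcontra]
      rw [hs]; exact hpos
    rw [integral_sub (integrable_const 1) hgint, integral_const, smul_eq_mul, mul_one] at hpos'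
    rw [havg]
    calc (μ Set.univ).toReal⁻¹ * ∫ x, g x ∂μ
        < (μ Set.univ).toReal⁻¹ * (μ Set.univ).toReal := by
          apply mul_lt_mul_of_pos_left _ (inv_pos.2 hMpos); linarith [show μ.real Set.univ = (μ Set.univ).toReal from rfl]
      _ = 1 := inv_mul_cancel₀ hMpos.ne'
  refine ⟨⟨hm0, hm1⟩, ?_⟩
  have havg2 : (⨍ x, |φ (w₁ x) - φ (w₂ x)| ∂μ)
      = (μ Set.univ).toReal⁻¹ * ∫ x, |φ (w₁ x) - φ (w₂ x)| ∂μ := by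
    rw [average_eq]; rfl
  have hstep2 : ∫ x, φ (g x) ∂μ ≤ ∫ x, |φ (w₁ x) - φ (w₂ x)| ∂μ :=
    integral_mono hφgint hhint hptwise
  set m : ℝ := ⨍ x, g x ∂μ with hm
  have hjensen : φ m ≤ (μ Set.univ).toReal⁻¹ * ∫ x, φ (g x) ∂μ := by
    rcases eq_or_lt_of_le hm0 with h | h
    · rw [← h, h0]
      have : 0 ≤ ∫ x, φ (g x) ∂μ := integral_nonneg hφg_nonneg
      positivity
    · obtain ⟨c, hc⟩ := stmt_4_support_line φ hconv m ⟨h, hm1⟩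
      have hint3 : Integrable (fun x => g x - m) μ := hgint.sub (integrable_const m)
      have hint2 : Integrable (fun x => c * (g x - m)) μ := hint3.const_mul c
      have hint_lhs : Integrable (fun x => φ m + c * (g x - m)) μ :=
        (integrable_const (φ m)).add hint2
      have hle : ∫ x, (φ m + c * (g x - m)) ∂μ ≤ ∫ x, φ (g x) ∂μ :=
        integral_mono hint_lhs hφgint fun x => hc _ (hg_mem x)
      have hcalc : ∫ x, (φ m + c * (g x - m)) ∂μ = φ m * (μ Set.univ).toReal := by
        rw [integral_add (integrable_const _) hint2, integral_const, integral_const_mul,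
          integral_sub hgint (integrable_const m), integral_const]
        have hgm' : ∫ x, g x ∂μ = m * (μ Set.univ).toReal := by
          rw [havg]; field_simp
        rw [hgm']; simp only [smul_eq_mul]
        rw [show μ.real Set.univ = (μ Set.univ).toReal from rfl]; ring
      rw [hcalc] at hle
      calc φ m = (μ Set.univ).toReal⁻¹ * (φ m * (μ Set.univ).toReal) := by field_simp
        _ ≤ (μ Set.univ).toReal⁻¹ * ∫ x, φ (g x) ∂μ :=
            mul_le_mul_of_nonneg_left hle (inv_pos.2 hMpos).le
  rw [havg2]
  exact hjensen.trans (mul_le_mul_of_nonneg_left hstep2 (inv_pos.2 hMpos).le)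
end

section
/- Let N ∈ ℕ, C₁, C₂ ≥ 0, and let g : (0,∞) → [0,∞) be continuous with ∫₀¹ s^N·g(s) ds ≤ C₁ and g(t) ≤ C₂·(g(s) + 1) for all 0 < s ≤ t. Then there exists a constant C₃ ≥ 0, depending only on N, C₁ and C₂, such that g(t) ≤ C₃·(t^{−(N+1)} + 1) for all t > 0. -/
open MeasureTheory

lemma pigeon_aux (N : ℕ) (C₁ : ℝ) (hC₁ : 0 ≤ C₁)
    (g : ℝ → ℝ)
    (hgint : MeasureTheory.IntegrableOn (fun s => s ^ N * g s) (Set.Ioc (0 : ℝ) 1))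
    (hgI : ∫ s in Set.Ioc (0 : ℝ) 1, s ^ N * g s ≤ C₁)
    (hgpos : ∀ t ∈ Set.Ioi (0 : ℝ), 0 ≤ g t)
    (t : ℝ) (ht : 0 < t) (ht1 : t ≤ 1) :
    ∃ s, t / 2 < s ∧ s ≤ t ∧ g s ≤ 2 ^ (N + 1) * (C₁ + 1) / t ^ (N + 1) := by
  by_contra h
  push_neg at h
  set K : ℝ := 2 ^ (N + 1) * (C₁ + 1) / t ^ (N + 1) with hK
  have htN : (0:ℝ) < t ^ (N + 1) := pow_pos ht _
  have hsub : Set.Ioc (t / 2) t ⊆ Set.Ioc (0 : ℝ) 1 := by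
    intro x hx
    exact ⟨lt_of_le_of_lt (by linarith) hx.1, hx.2.trans ht1⟩
  have hint' : MeasureTheory.IntegrableOn (fun s => s ^ N * g s) (Set.Ioc (t / 2) t) :=
    hgint.mono_set hsub
  have hlow : (t / 2) ^ N * K * (volume (Set.Ioc (t / 2) t)).toReal
      ≤ ∫ s in Set.Ioc (t / 2) t, s ^ N * g s := by
    rw [show (t / 2) ^ N * K * (volume (Set.Ioc (t / 2) t)).toReal = volume.real (Set.Ioc (t / 2) t) • ((t / 2) ^ N * K) by rw [smul_eq_mul, Measure.real]; ring]
    apply MeasureTheory.setIntegral_ge_of_const_le measurableSet_Ioc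
      (by simp [Real.volume_Ioc])
    · intro x hx
      have hx0 : 0 < x := lt_of_le_of_lt (by linarith) hx.1
      have hgx : K ≤ g x := le_of_lt (h x hx.1 hx.2)
      have hKpos : 0 ≤ K := by
        apply div_nonneg (by positivity) (le_of_lt htN)
      have hxN : (t / 2) ^ N ≤ x ^ N := pow_le_pow_left₀ (by linarith) (le_of_lt hx.1) N
      calc (t / 2) ^ N * K ≤ x ^ N * K := by
            apply mul_le_mul_of_nonneg_right hxN hKpos
        _ ≤ x ^ N * g x := by
            apply mul_le_mul_of_nonneg_left hgx (by positivity)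
    · exact hint'
  have hmono : ∫ s in Set.Ioc (t / 2) t, s ^ N * g s
      ≤ ∫ s in Set.Ioc (0 : ℝ) 1, s ^ N * g s := by
    apply MeasureTheory.setIntegral_mono_set hgint
    · filter_upwards [MeasureTheory.ae_restrict_mem measurableSet_Ioc] with x hx
      exact mul_nonneg (pow_nonneg hx.1.le N) (hgpos x hx.1)
    · exact Filter.Eventually.of_forall hsub
  have hvol : (volume (Set.Ioc (t / 2) t)).toReal = t / 2 := by
    rw [Real.volume_Ioc]
    rw [ENNReal.toReal_ofReal (by linarith)]
    ring
  rw [hvol] at hlow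
  have hcalc : (t / 2) ^ N * K * (t / 2) = C₁ + 1 := by
    rw [hK]
    rw [div_pow]
    field_simp
    ring
  rw [hcalc] at hlow
  linarith

/-- **Pigeonhole/propagation smoothing estimate (proof of Lemma 3.3).**
Let `N ∈ ℕ`, `C₁, C₂ ≥ 0` and `g : (0,∞) → [0,∞)` continuous with
`∫₀¹ s^N g(s) ds ≤ C₁` and `g(t) ≤ C₂ (g(s) + 1)` for all `0 < s ≤ t`. Then there is a
constant `C₃ ≥ 0`, depending only on `N, C₁, C₂`, with
`g(t) ≤ C₃ (t^{−(N+1)} + 1)` for all `t > 0`. -/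
theorem stmt_10 (N : ℕ) (C₁ C₂ : ℝ) (hC₁ : 0 ≤ C₁) (hC₂ : 0 ≤ C₂)
    (g : ℝ → ℝ) (hgc : ContinuousOn g (Set.Ioi (0 : ℝ)))
    (hgpos : ∀ t ∈ Set.Ioi (0 : ℝ), 0 ≤ g t)
    (hgint : MeasureTheory.IntegrableOn (fun s => s ^ N * g s) (Set.Ioc (0 : ℝ) 1))
    (hgI : ∫ s in Set.Ioc (0 : ℝ) 1, s ^ N * g s ≤ C₁)
    (hprop : ∀ s t : ℝ, 0 < s → s ≤ t → g t ≤ C₂ * (g s + 1)) :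
    ∃ C₃ : ℝ, 0 ≤ C₃ ∧ ∀ t ∈ Set.Ioi (0 : ℝ), g t ≤ C₃ * ((t ^ (N + 1))⁻¹ + 1) := by
  set A : ℝ := 2 ^ (N + 1) * (C₁ + 1) with hA
  have hApos : 0 < A := by positivity
  refine ⟨C₂ * (C₂ + 1) * (A + 1), by positivity, ?_⟩
  intro t ht
  rw [Set.mem_Ioi] at ht
  have htN : (0:ℝ) < t ^ (N + 1) := pow_pos ht _
  rcases le_or_gt t 1 with ht1 | ht1
  · obtain ⟨s, hs1, hs2, hs3⟩ := pigeon_aux N C₁ hC₁ g hgint hgI hgpos t ht ht1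
    have hs0 : 0 < s := lt_of_le_of_lt (by linarith) hs1
    have h1 : g t ≤ C₂ * (g s + 1) := hprop s t hs0 hs2
    have h2 : g t ≤ C₂ * (A / t ^ (N + 1) + 1) := by
      have := hs3
      nlinarith [hgpos s (Set.mem_Ioi.mpr hs0)]
    have hdiv : A / t ^ (N + 1) = A * (t ^ (N + 1))⁻¹ := by ring
    rw [hdiv] at h2
    have hinv : (0:ℝ) ≤ (t ^ (N + 1))⁻¹ := by positivity
    have h3 : C₂ * (A * (t ^ (N + 1))⁻¹ + 1) ≤ C₂ * (C₂ + 1) * (A + 1) * ((t ^ (N + 1))⁻¹ + 1) := by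
      nlinarith [mul_nonneg hC₂ hinv, mul_nonneg (mul_nonneg hC₂ hApos.le) hinv,
        mul_nonneg (mul_nonneg (mul_nonneg hC₂ hC₂) hApos.le) hinv,
        mul_nonneg (mul_nonneg hC₂ hC₂) hinv, mul_nonneg hC₂ hApos.le,
        mul_nonneg (mul_nonneg hC₂ hC₂) hApos.le]
    linarith
  · obtain ⟨s, hs1, hs2, hs3⟩ := pigeon_aux N C₁ hC₁ g hgint hgI hgpos 1 one_pos le_rfl
    have hs0 : 0 < s := lt_of_le_of_lt (by norm_num) hs1
    have h1 : g 1 ≤ C₂ * (g s + 1) := hprop s 1 hs0 hs2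
    have h2 : g t ≤ C₂ * (g 1 + 1) := hprop 1 t one_pos (le_of_lt ht1)
    have hs3' : g s ≤ A := by simpa using hs3
    have hinv : (0:ℝ) ≤ (t ^ (N + 1))⁻¹ := by positivity
    have hg1 : g 1 ≤ C₂ * (A + 1) :=
      h1.trans (mul_le_mul_of_nonneg_left (by linarith) hC₂)
    have hgt : g t ≤ C₂ * (C₂ * (A + 1) + 1) :=
      h2.trans (mul_le_mul_of_nonneg_left (by linarith) hC₂)
    have hle : C₂ * (C₂ * (A + 1) + 1) ≤ C₂ * (C₂ + 1) * (A + 1) := by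
      nlinarith [mul_nonneg hC₂ hApos.le]
    have hfin : C₂ * (C₂ + 1) * (A + 1) ≤ C₂ * (C₂ + 1) * (A + 1) * ((t ^ (N + 1))⁻¹ + 1) := by
      nlinarith [mul_nonneg (mul_nonneg (mul_nonneg hC₂ (by linarith : (0:ℝ) ≤ C₂ + 1))
        (by linarith : (0:ℝ) ≤ A + 1)) hinv]
    linarith
end

section
/- Let (E, d) be a metric space, A ⊆ E a totally bounded set, T > 0, α ∈ (0,1], M ≥ 0, L ≥ 0, and let S : [0,T] × E → E satisfy d(S(t,x), S(s,x)) ≤ M·|t − s|^α for all t, s ∈ [0,T] and x ∈ A, and d(S(t,x), S(t,y)) ≤ L·d(x,y) for all t ∈ [0,T] and x, y ∈ A. Then the set B = {S(t,x) : t ∈ [0,T], x ∈ A} is totally bounded and its fractal dimension satisfies dim_f^E(B) ≤ 1/α + dim_f^E(A). -/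
open Set Metric Filter ENNReal

/-- The covering number `N_ε(M)`: the minimal number of balls of radius `ε` with
centers in `M` needed to cover `M` (with value `⊤` if no finite cover exists). -/
noncomputable def coveringNumber {Y : Type*} [PseudoMetricSpace Y] (B : Set Y) (ρ : ℝ) : ℕ∞ :=
  sInf {n : ℕ∞ | ∃ C : Set Y, C ⊆ B ∧ C.encard ≤ n ∧ B ⊆ ⋃ c ∈ C, Metric.ball c ρ}

/-- The fractal (box-counting) dimension
`dim_f(M) = limsup_{ε → 0⁺} log N_ε(M) / log (1/ε)`. -/
noncomputable def fractalDim {E : Type*} [PseudoMetricSpace E] (M : Set E) : ℝ≥0∞ :=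
  Filter.limsup
    (fun ε : ℝ => ENNReal.ofReal (Real.log ((coveringNumber M ε).toNat) / Real.log (1 / ε)))
    (nhdsWithin 0 (Set.Ioi 0))

section Aux

lemma my_limsup_add_le {ι : Type*} (l : Filter ι) (u v : ι → ℝ≥0∞) :
    limsup (fun i => u i + v i) l ≤ limsup u l + limsup v l := by
  rcases eq_top_or_lt_top (limsup u l) with h | hu
  · simp [h]
  rcases eq_top_or_lt_top (limsup v l) with h | hv
  · simp [h]
  refine ENNReal.le_of_forall_pos_le_add fun η hη _ => ?_
  have hη2 : ((η : ℝ≥0∞) / 2) ≠ 0 := by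
    simp [ENNReal.div_eq_zero_iff, hη.ne']
  have h1 : ∀ᶠ i in l, u i < limsup u l + η / 2 :=
    Filter.eventually_lt_of_limsup_lt (ENNReal.lt_add_right hu.ne hη2)
  have h2 : ∀ᶠ i in l, v i < limsup v l + η / 2 :=
    Filter.eventually_lt_of_limsup_lt (ENNReal.lt_add_right hv.ne hη2)
  have : ∀ᶠ i in l, u i + v i ≤ limsup u l + limsup v l + η := by
    filter_upwards [h1, h2] with i hi1 hi2
    calc u i + v i ≤ (limsup u l + η/2) + (limsup v l + η/2) :=
          add_le_add hi1.le hi2.le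
      _ = limsup u l + limsup v l + η := by
          rw [add_add_add_comm, ENNReal.add_halves]
  exact limsup_le_of_le (by isBoundedDefault) this

lemma my_limsup_map {ι κ : Type*} (l : Filter ι) (m : ι → κ) (u : κ → ℝ≥0∞) :
    limsup u (Filter.map m l) = limsup (u ∘ m) l := by
  simp [Filter.limsup_eq, Filter.eventually_map]

lemma my_map_mul (c : ℝ) (hc : 0 < c) :
    Filter.map (fun ε : ℝ => c * ε) (nhdsWithin 0 (Set.Ioi 0)) = nhdsWithin 0 (Set.Ioi 0) := by
  conv_lhs => rw [← comap_mulLeft_nhdsGT_zero hc]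
  exact Filter.map_comap_of_surjective (fun y => ⟨c⁻¹ * y, by field_simp⟩) _

lemma enat_sInf_mem {U : Set ℕ∞} (h : U.Nonempty) : sInf U ∈ U := by
  obtain ⟨m, hm, hmin⟩ := wellFounded_lt.has_min U h
  exact IsLeast.csInf_mem ⟨hm, fun x hx => not_lt.1 (hmin x hx)⟩

lemma coveringNumber_le {Y : Type*} [PseudoMetricSpace Y] {B : Set Y} {ρ : ℝ} {C : Set Y}
    (h1 : C ⊆ B) {n : ℕ∞} (h2 : C.encard ≤ n) (h3 : B ⊆ ⋃ c ∈ C, Metric.ball c ρ) :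
    coveringNumber B ρ ≤ n :=
  sInf_le ⟨C, h1, h2, h3⟩

lemma exists_min_cover {Y : Type*} [PseudoMetricSpace Y] {A : Set Y} (hA : TotallyBounded A)
    {δ : ℝ} (hδ : 0 < δ) :
    ∃ C : Set Y, C ⊆ A ∧ C.Finite ∧ C.encard ≤ coveringNumber A δ ∧
      A ⊆ ⋃ c ∈ C, Metric.ball c δ := by
  obtain ⟨t, htA, htfin, htcov⟩ := totallyBounded_iff_subset.1 hA _ (Metric.dist_mem_uniformity hδ)
  have hne : {n : ℕ∞ | ∃ C : Set Y, C ⊆ A ∧ C.encard ≤ n ∧ A ⊆ ⋃ c ∈ C, Metric.ball c δ}.Nonempty :=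
    ⟨t.encard, t, htA, le_rfl, htcov⟩
  obtain ⟨C, hC1, hC2, hC3⟩ := enat_sInf_mem hne
  have hlt : coveringNumber A δ < ⊤ :=
    lt_of_le_of_lt (coveringNumber_le htA le_rfl htcov) htfin.encard_lt_top
  exact ⟨C, hC1, Set.encard_lt_top_iff.1 (lt_of_le_of_lt hC2 hlt), hC2, hC3⟩

lemma coveringNumber_ne_top {Y : Type*} [PseudoMetricSpace Y] {A : Set Y} (hA : TotallyBounded A)
    {δ : ℝ} (hδ : 0 < δ) : coveringNumber A δ ≠ ⊤ := by
  obtain ⟨C, h1, h2, h3, h4⟩ := exists_min_cover hA hδ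
  exact (lt_of_le_of_lt (coveringNumber_le h1 le_rfl h4) h2.encard_lt_top).ne

lemma one_le_coveringNumber {Y : Type*} [PseudoMetricSpace Y] {A : Set Y} (hAne : A.Nonempty)
    {δ : ℝ} : 1 ≤ coveringNumber A δ := by
  refine le_sInf fun n hn => ?_
  obtain ⟨C, hC1, hC2, hC3⟩ := hn
  rw [ENat.one_le_iff_ne_zero]
  rintro rfl
  rw [nonpos_iff_eq_zero, Set.encard_eq_zero] at hC2
  subst hC2
  simp only [Set.mem_empty_iff_false, Set.iUnion_of_empty, Set.iUnion_empty,
    Set.subset_empty_iff] at hC3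
  exact hAne.ne_empty hC3

lemma encard_biUnion_le {ι Y : Type*} (s : Finset ι) (f : ι → Set Y) :
    (⋃ i ∈ s, f i).encard ≤ ∑ i ∈ s, (f i).encard := by
  classical
  induction s using Finset.induction_on with
  | empty => simp
  | insert _ _ hx ih =>
      rename_i a s'
      rw [Finset.set_biUnion_insert, Finset.sum_insert hx]
      exact le_trans (Set.encard_union_le _ _) (add_le_add_right ih _)

lemma key_cover {E : Type*} [MetricSpace E] (A : Set E) (hA : TotallyBounded A)
    (T α M L : ℝ) (hT : 0 < T) (hα : α ∈ Set.Ioc (0 : ℝ) 1) (hM : 0 ≤ M) (hL : 0 ≤ L)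
    (S : ℝ → E → E)
    (hHolder : ∀ t ∈ Set.Icc (0 : ℝ) T, ∀ s ∈ Set.Icc (0 : ℝ) T, ∀ x ∈ A,
      dist (S t x) (S s x) ≤ M * |t - s| ^ α)
    (hLip : ∀ t ∈ Set.Icc (0 : ℝ) T, ∀ x ∈ A, ∀ y ∈ A,
      dist (S t x) (S t y) ≤ L * dist x y)
    {ε : ℝ} (hε : 0 < ε) :
    ∃ C : Set E, C ⊆ (⋃ t ∈ Set.Icc (0 : ℝ) T, S t '' A) ∧ C.Finite ∧
      C.encard ≤ ((⌈T / (ε / (2*(M+1))) ^ (1/α)⌉₊ + 1 : ℕ) : ℕ∞) *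
        coveringNumber A ((1/(2*(L+1))) * ε) ∧
      (⋃ t ∈ Set.Icc (0 : ℝ) T, S t '' A) ⊆ ⋃ c ∈ C, Metric.ball c ε := by
  have hα0 : 0 < α := hα.1
  have hK : (0:ℝ) < 2*(M+1) := by linarith
  set K : ℝ := 2*(M+1) with hKdef
  set s : ℝ := (ε / K) ^ (1/α) with hsdef
  have hs : 0 < s := Real.rpow_pos_of_pos (by positivity) _
  have hsα : s ^ α = ε / K := by
    rw [hsdef, ← Real.rpow_mul (by positivity), one_div,
      inv_mul_cancel₀ hα0.ne', Real.rpow_one]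
  set δ : ℝ := (1/(2*(L+1))) * ε with hδdef
  have hδ : 0 < δ := by positivity
  obtain ⟨CA, hCA_A, hCA_fin, hCA_card, hCA_cov⟩ := exists_min_cover hA hδ
  set n : ℕ := ⌈T / s⌉₊ with hndef
  refine ⟨⋃ i ∈ Finset.range (n+1), S (min ((i:ℝ)*s) T) '' CA, ?_, ?_, ?_, ?_⟩
  · intro b hb
    simp only [Set.mem_iUnion, Finset.mem_coe, Finset.mem_range, Set.mem_image] at hb
    obtain ⟨i, hi, y, hy, rfl⟩ := hb
    refine Set.mem_biUnion ?_ (Set.mem_image_of_mem _ (hCA_A hy))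
    exact ⟨le_min (by positivity) hT.le, min_le_right _ _⟩
  · exact Set.Finite.biUnion (Finset.range (n+1)).finite_toSet fun i _ => hCA_fin.image _
  · calc (⋃ i ∈ Finset.range (n+1), S (min ((i:ℝ)*s) T) '' CA).encard
        ≤ ∑ i ∈ Finset.range (n+1), (S (min ((i:ℝ)*s) T) '' CA).encard :=
          encard_biUnion_le _ _
      _ ≤ ∑ _i ∈ Finset.range (n+1), CA.encard :=
          Finset.sum_le_sum fun i _ => Set.encard_image_le _ _
      _ = ((n+1 : ℕ) : ℕ∞) * CA.encard := by
          rw [Finset.sum_const, Finset.card_range, nsmul_eq_mul]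
      _ ≤ _ := mul_le_mul_right hCA_card _
  · intro b hb
    obtain ⟨t, ht, x, hx, rfl⟩ := by
      simpa only [Set.mem_iUnion, Set.mem_image, exists_prop] using hb
    obtain ⟨y, hy, hxy⟩ := by
      simpa only [Set.mem_iUnion, exists_prop] using hCA_cov hx
    rw [Metric.mem_ball] at hxy
    set i : ℕ := ⌊t / s⌋₊ with hidef
    have hts : 0 ≤ t / s := div_nonneg ht.1 hs.le
    have h1 : (i:ℝ) * s ≤ t := (le_div_iff₀ hs).1 (Nat.floor_le hts)
    have h2 : t < ((i:ℝ)+1) * s := by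
      have := Nat.lt_floor_add_one (t / s)
      rw [div_lt_iff₀ hs] at this
      exact_mod_cast this
    have hiT : (i:ℝ) * s ≤ T := h1.trans ht.2
    have hti : min ((i:ℝ)*s) T = (i:ℝ)*s := min_eq_left hiT
    have hin : i ∈ Finset.range (n + 1) := by
      rw [Finset.mem_range, Nat.lt_succ_iff, hidef, hndef]
      have hdd : t / s ≤ T / s := by gcongr; exact ht.2
      exact (Nat.floor_le_floor hdd).trans (Nat.floor_le_ceil _)
    refine Set.mem_biUnion (Set.mem_biUnion hin (Set.mem_image_of_mem _ hy)) ?_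
    rw [Metric.mem_ball]
    have hti_mem : min ((i:ℝ)*s) T ∈ Set.Icc (0:ℝ) T :=
      ⟨le_min (by positivity) hT.le, min_le_right _ _⟩
    have habs : |t - min ((i:ℝ)*s) T| ≤ s := by
      rw [hti, abs_of_nonneg (by linarith)]
      linarith
    have hd1 : dist (S t x) (S (min ((i:ℝ)*s) T) x) ≤ M * (ε / K) := by
      refine (hHolder t ht _ hti_mem x hx).trans ?_
      rw [← hsα]
      exact mul_le_mul_of_nonneg_left
        (Real.rpow_le_rpow (abs_nonneg _) habs hα0.le) hM
    have hd2 : dist (S (min ((i:ℝ)*s) T) x) (S (min ((i:ℝ)*s) T) y) ≤ L * δ :=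
      (hLip _ hti_mem x hx y (hCA_A hy)).trans
        (mul_le_mul_of_nonneg_left hxy.le hL)
    have hlast : M * (ε / K) + L * δ < ε := by
      rw [hKdef, hδdef]
      have hL1 : (0:ℝ) < L + 1 := by linarith
      have hM1 : (0:ℝ) < M + 1 := by linarith
      have e1 : M * (ε / (2*(M+1))) < ε/2 := by
        rw [mul_div_assoc', div_lt_div_iff₀ (by positivity) (by norm_num)]
        nlinarith
      have e2 : L * (1/(2*(L+1)) * ε) ≤ ε/2 := by
        have h : L/(L+1) ≤ 1 := (div_le_one hL1).2 (by linarith)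
        calc L * (1/(2*(L+1)) * ε) = (L/(L+1)) * (ε/2) := by field_simp
          _ ≤ 1 * (ε/2) := mul_le_mul_of_nonneg_right h (by positivity)
          _ = ε/2 := one_mul _
      linarith
    calc dist (S t x) (S (min ((i:ℝ)*s) T) y)
        ≤ dist (S t x) (S (min ((i:ℝ)*s) T) x) +
          dist (S (min ((i:ℝ)*s) T) x) (S (min ((i:ℝ)*s) T) y) := dist_triangle _ _ _
      _ ≤ M * (ε / K) + L * δ := add_le_add hd1 hd2
      _ < ε := hlast

end Aux

/-- **Fractal dimension of the time-suspension (used in Theorems 2.15 and 2.18).**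
Let `A ⊆ E` be totally bounded, `T > 0`, `α ∈ (0,1]`, `M ≥ 0`, `L ≥ 0`, and let
`S : [0,T] × E → E` be `α`-Hölder in time (with constant `M`) and `L`-Lipschitz in
space on `A`. Then `B = ⋃_{t ∈ [0,T]} S t '' A` is totally bounded and
`dim_f(B) ≤ 1/α + dim_f(A)`. -/
theorem stmt_14 {E : Type*} [MetricSpace E] (A : Set E) (hA : TotallyBounded A)
    (T α M L : ℝ) (hT : 0 < T) (hα : α ∈ Set.Ioc (0 : ℝ) 1) (hM : 0 ≤ M) (hL : 0 ≤ L)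
    (S : ℝ → E → E)
    (hHolder : ∀ t ∈ Set.Icc (0 : ℝ) T, ∀ s ∈ Set.Icc (0 : ℝ) T, ∀ x ∈ A,
      dist (S t x) (S s x) ≤ M * |t - s| ^ α)
    (hLip : ∀ t ∈ Set.Icc (0 : ℝ) T, ∀ x ∈ A, ∀ y ∈ A,
      dist (S t x) (S t y) ≤ L * dist x y) :
    TotallyBounded (⋃ t ∈ Set.Icc (0 : ℝ) T, S t '' A) ∧
    fractalDim (⋃ t ∈ Set.Icc (0 : ℝ) T, S t '' A) ≤
      ENNReal.ofReal (1 / α) + fractalDim A := by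
  have hα0 : 0 < α := hα.1
  set B : Set E := ⋃ t ∈ Set.Icc (0 : ℝ) T, S t '' A with hBdef
  -- total boundedness
  have htb : TotallyBounded B := by
    rw [Metric.totallyBounded_iff]
    intro ε hε
    obtain ⟨C, _, hfin, _, hcov⟩ := key_cover A hA T α M L hT hα hM hL S hHolder hLip hε
    exact ⟨C, hfin, hcov⟩
  refine ⟨htb, ?_⟩
  rcases A.eq_empty_or_nonempty with hAe | hAne
  · -- empty case
    have hBe : B = ∅ := by simp [hBdef, hAe]
    have hcov0 : ∀ ε : ℝ, coveringNumber B ε = 0 := fun ε =>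
      le_antisymm (coveringNumber_le (empty_subset _) (by simp)
        (by rw [hBe]; exact empty_subset _)) zero_le
    have : fractalDim B = 0 := by
      unfold fractalDim
      have h0 : (fun ε : ℝ => ENNReal.ofReal
          (Real.log ((coveringNumber B ε).toNat) / Real.log (1/ε))) = fun _ => 0 := by
        funext ε; rw [hcov0 ε]; simp
      rw [h0]
      exact limsup_const 0
    rw [this]
    exact zero_le
  -- nonempty case
  have hK : (0:ℝ) < 2*(M+1) := by linarith
  set c : ℝ := 1/(2*(L+1)) with hcdef
  have hc : 0 < c := by positivity
  have hc1 : c < 1 := by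
    rw [hcdef, div_lt_one (by linarith)]
    linarith
  set C₀ : ℝ := T * (2*(M+1)) ^ (1/α) + 2 with hC₀def
  have hC₀ : 1 < C₀ := by
    have : 0 < T * (2*(M+1)) ^ (1/α) := mul_pos hT (Real.rpow_pos_of_pos hK _)
    rw [hC₀def]; linarith
  -- the three functions
  set f : ℝ → ℝ≥0∞ := fun ε =>
    ENNReal.ofReal (Real.log ((coveringNumber B ε).toNat) / Real.log (1/ε)) with hfdef
  set g : ℝ → ℝ≥0∞ := fun ε =>
    ENNReal.ofReal ((Real.log C₀ + (1/α) * Real.log (1/ε)) / Real.log (1/ε)) with hgdef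
  set h : ℝ → ℝ≥0∞ := fun ε =>
    ENNReal.ofReal (Real.log ((coveringNumber A (c*ε)).toNat) / Real.log (1/ε)) with hhdef
  have hl_top : Tendsto (fun ε : ℝ => Real.log (1/ε)) (nhdsWithin 0 (Set.Ioi 0)) atTop := by
    have h1 : Tendsto Real.log (nhdsWithin (0:ℝ) (Set.Ioi 0)) atBot :=
      Real.tendsto_log_nhdsGT_zero
    have h2 := tendsto_neg_atBot_atTop.comp h1
    refine h2.congr fun ε => ?_
    simp [one_div, Real.log_inv]
  have hIoo : Set.Ioo (0:ℝ) 1 ∈ nhdsWithin (0:ℝ) (Set.Ioi 0) :=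
    Ioo_mem_nhdsGT_of_mem ⟨le_refl 0, one_pos⟩
  -- small helper facts about the covering number of A at radius c*ε
  have hNfacts : ∀ ε : ℝ, 0 < ε → coveringNumber A (c*ε) ≠ ⊤ ∧
      1 ≤ (coveringNumber A (c*ε)).toNat := by
    intro ε hε
    have hNtop : coveringNumber A (c*ε) ≠ ⊤ := coveringNumber_ne_top hA (by positivity)
    have hN0 : coveringNumber A (c*ε) ≠ 0 :=
      ENat.one_le_iff_ne_zero.1 (one_le_coveringNumber hAne)
    refine ⟨hNtop, Nat.one_le_iff_ne_zero.2 ?_⟩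
    rw [Ne, ENat.toNat_eq_zero]
    push_neg
    exact ⟨hN0, hNtop⟩
  -- pointwise bound
  have hfgh : ∀ᶠ ε in nhdsWithin (0:ℝ) (Set.Ioi 0), f ε ≤ g ε + h ε := by
    filter_upwards [hIoo] with ε hε
    obtain ⟨hε0, hε1⟩ := hε
    have hl : 0 < Real.log (1/ε) := Real.log_pos (by rw [lt_div_iff₀ hε0]; linarith)
    obtain ⟨hNtop, hN1⟩ := hNfacts ε hε0
    set N : ℕ∞ := coveringNumber A (c*ε) with hNdef
    set n : ℕ := ⌈T / (ε / (2*(M+1))) ^ (1/α)⌉₊ + 1 with hndef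
    have hn1 : 1 ≤ n := by omega
    have hcovB : coveringNumber B ε ≤ ((n : ℕ) : ℕ∞) * N := by
      obtain ⟨C, hC1, _, hC3, hC4⟩ :=
        key_cover A hA T α M L hT hα hM hL S hHolder hLip hε0
      rw [← hcdef] at hC3
      exact coveringNumber_le hC1 hC3 hC4
    have hNBle : (coveringNumber B ε).toNat ≤ n * N.toNat := by
      refine ENat.toNat_le_of_le_coe (hcovB.trans_eq ?_)
      rw [Nat.cast_mul]
      congr 1
      exact (ENat.coe_toNat hNtop).symm
    have hmulpos : 1 ≤ n * N.toNat := Nat.one_le_iff_ne_zero.2 (by positivity)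
    have hnum1 : Real.log ((coveringNumber B ε).toNat) ≤ Real.log ((n * N.toNat : ℕ) : ℝ) := by
      rcases Nat.eq_zero_or_pos (coveringNumber B ε).toNat with h0 | hpos
      · rw [h0]
        simp only [Nat.cast_zero, Real.log_zero]
        exact Real.log_nonneg (by exact_mod_cast hmulpos)
      · exact Real.log_le_log (by exact_mod_cast hpos) (by exact_mod_cast hNBle)
    have hnsplit : Real.log ((n * N.toNat : ℕ) : ℝ)
        = Real.log (n : ℝ) + Real.log ((N.toNat : ℕ) : ℝ) := by
      push_cast
      refine Real.log_mul (by positivity) ?_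
      have h1 : (1:ℝ) ≤ (N.toNat : ℝ) := by exact_mod_cast hN1
      positivity
    have hsp : (0:ℝ) < (ε / (2*(M+1))) ^ (1/α) := Real.rpow_pos_of_pos (by positivity) _
    have hone : (1:ℝ) ≤ (1/ε) ^ (1/α) := by
      calc (1:ℝ) = 1 ^ (1/α) := (Real.one_rpow _).symm
        _ ≤ (1/ε) ^ (1/α) :=
            Real.rpow_le_rpow zero_le_one (by rw [le_div_iff₀ hε0]; linarith) (by positivity)
    have hTK : 0 < T * (2*(M+1)) ^ (1/α) := mul_pos hT (Real.rpow_pos_of_pos hK _)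
    have e3 : T / (ε / (2*(M+1))) ^ (1/α) = T * (2*(M+1)) ^ (1/α) * (1/ε) ^ (1/α) := by
      rw [Real.div_rpow hε0.le hK.le, div_div_eq_mul_div, one_div ε, Real.inv_rpow hε0.le]
      ring
    have hcount : (n : ℝ) ≤ C₀ * (1/ε) ^ (1/α) := by
      have hceil : (⌈T / (ε / (2*(M+1))) ^ (1/α)⌉₊ : ℝ) < T / (ε / (2*(M+1))) ^ (1/α) + 1 :=
        Nat.ceil_lt_add_one (by positivity)
      rw [hndef, hC₀def]
      push_cast
      nlinarith [hceil, e3, hone, mul_nonneg hTK.le (sub_nonneg.2 hone)]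
    have hlogn : Real.log (n : ℝ) ≤ Real.log C₀ + (1/α) * Real.log (1/ε) := by
      have h1 : Real.log (n : ℝ) ≤ Real.log (C₀ * (1/ε) ^ (1/α)) :=
        Real.log_le_log (by exact_mod_cast hn1) hcount
      rwa [Real.log_mul (by linarith) (by positivity), Real.log_rpow (by positivity)] at h1
    have hb : 0 ≤ Real.log ((N.toNat : ℕ) : ℝ) := Real.log_nonneg (by exact_mod_cast hN1)
    have ha : 0 ≤ Real.log C₀ + (1/α) * Real.log (1/ε) := by
      have h1 : 0 < Real.log C₀ := Real.log_pos hC₀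
      have h2 : 0 ≤ (1/α) * Real.log (1/ε) := mul_nonneg (by positivity) hl.le
      linarith
    calc f ε ≤ ENNReal.ofReal
          ((Real.log C₀ + (1/α) * Real.log (1/ε) + Real.log ((N.toNat : ℕ) : ℝ))
            / Real.log (1/ε)) := by
          apply ENNReal.ofReal_le_ofReal
          have hnn : Real.log (((coveringNumber B ε).toNat : ℕ) : ℝ)
              ≤ Real.log C₀ + (1/α) * Real.log (1/ε) + Real.log ((N.toNat : ℕ) : ℝ) :=
            hnum1.trans (by rw [hnsplit]; linarith)
          exact div_le_div_of_nonneg_right hnn hl.le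
      _ = g ε + h ε := by
          rw [add_div, ENNReal.ofReal_add (div_nonneg ha hl.le) (div_nonneg hb hl.le)]
  -- assembling
  have hfB : fractalDim B = limsup f (nhdsWithin (0:ℝ) (Set.Ioi 0)) := rfl
  have hstep2 : limsup f (nhdsWithin (0:ℝ) (Set.Ioi 0)) ≤
      limsup (fun ε => g ε + h ε) (nhdsWithin (0:ℝ) (Set.Ioi 0)) :=
    limsup_le_limsup hfgh
  have hstep3 := my_limsup_add_le (nhdsWithin (0:ℝ) (Set.Ioi 0)) g h
  -- limsup of g
  have hg_lim : limsup g (nhdsWithin (0:ℝ) (Set.Ioi 0)) = ENNReal.ofReal (1/α) := by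
    have h1 : Tendsto (fun ε : ℝ => Real.log C₀ * (Real.log (1/ε))⁻¹ + 1/α)
        (nhdsWithin (0:ℝ) (Set.Ioi 0)) (nhds (1/α)) := by
      have h2 := (tendsto_inv_atTop_zero.comp hl_top).const_mul (Real.log C₀)
      have h3 := h2.add_const (1/α)
      simpa using h3
    have heq : (fun ε : ℝ => (Real.log C₀ + (1/α) * Real.log (1/ε)) / Real.log (1/ε))
        =ᶠ[nhdsWithin (0:ℝ) (Set.Ioi 0)]
        (fun ε : ℝ => Real.log C₀ * (Real.log (1/ε))⁻¹ + 1/α) := by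
      filter_upwards [hIoo] with ε hε
      have hl : 0 < Real.log (1/ε) := Real.log_pos (by rw [lt_div_iff₀ hε.1]; linarith [hε.2])
      rw [add_div, mul_div_assoc, div_self hl.ne', mul_one, div_eq_mul_inv]
    have h4 : Tendsto g (nhdsWithin (0:ℝ) (Set.Ioi 0)) (nhds (ENNReal.ofReal (1/α))) :=
      (ENNReal.continuous_ofReal.tendsto _).comp (Tendsto.congr' heq.symm h1)
    exact h4.limsup_eq
  -- limsup of h
  have hh_lim : limsup h (nhdsWithin (0:ℝ) (Set.Ioi 0)) ≤ fractalDim A := by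
    set F : ℝ → ℝ≥0∞ := fun δ' =>
      ENNReal.ofReal (Real.log ((coveringNumber A δ').toNat) / Real.log (1/δ')) with hFdef
    have hFc : limsup (fun ε : ℝ => F (c*ε)) (nhdsWithin (0:ℝ) (Set.Ioi 0)) = fractalDim A := by
      have hm := my_limsup_map (nhdsWithin (0:ℝ) (Set.Ioi 0)) (fun ε : ℝ => c * ε) F
      rw [my_map_mul c hc] at hm
      exact hm.symm
    have hstep : ∀ η : ℝ, 0 < η →
        limsup h (nhdsWithin (0:ℝ) (Set.Ioi 0)) ≤ ENNReal.ofReal (1+η) * fractalDim A := by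
      intro η hη
      have hev : ∀ᶠ ε in nhdsWithin (0:ℝ) (Set.Ioi 0),
          h ε ≤ ENNReal.ofReal (1+η) * F (c*ε) := by
        filter_upwards [hIoo, hl_top.eventually_ge_atTop (Real.log (1/c) / η)] with ε hε hηε
        obtain ⟨hε0, hε1⟩ := hε
        have hl : 0 < Real.log (1/ε) := Real.log_pos (by rw [lt_div_iff₀ hε0]; linarith)
        have hcε1 : c * ε < 1 := by nlinarith
        have hl' : 0 < Real.log (1/(c*ε)) :=
          Real.log_pos (by rw [lt_div_iff₀ (by positivity)]; linarith)
        have hlc : Real.log (1/(c*ε)) = Real.log (1/c) + Real.log (1/ε) := by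
          have hsplit : (1:ℝ)/(c*ε) = (1/c) * (1/ε) := by field_simp
          rw [hsplit, Real.log_mul (by positivity : (0:ℝ) < 1/c).ne'
            (by positivity : (0:ℝ) < 1/ε).ne']
        have hηl : Real.log (1/c) ≤ η * Real.log (1/ε) := by
          rw [div_le_iff₀ hη] at hηε; linarith
        have hkey : Real.log (1/(c*ε)) ≤ (1+η) * Real.log (1/ε) := by
          rw [hlc, add_mul, one_mul]; linarith
        obtain ⟨hNtop, hN1⟩ := hNfacts ε hε0
        have hb : 0 ≤ Real.log (((coveringNumber A (c*ε)).toNat : ℕ) : ℝ) :=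
          Real.log_nonneg (by exact_mod_cast hN1)
        have hmain : Real.log (((coveringNumber A (c*ε)).toNat : ℕ) : ℝ) / Real.log (1/ε)
            ≤ (1+η) * (Real.log (((coveringNumber A (c*ε)).toNat : ℕ) : ℝ)
              / Real.log (1/(c*ε))) := by
          rw [mul_div_assoc', div_le_div_iff₀ hl hl']
          calc Real.log (((coveringNumber A (c*ε)).toNat : ℕ) : ℝ) * Real.log (1/(c*ε))
              ≤ Real.log (((coveringNumber A (c*ε)).toNat : ℕ) : ℝ)
                * ((1+η) * Real.log (1/ε)) := mul_le_mul_of_nonneg_left hkey hb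
            _ = (1+η) * Real.log (((coveringNumber A (c*ε)).toNat : ℕ) : ℝ)
                * Real.log (1/ε) := by ring
        calc h ε ≤ ENNReal.ofReal ((1+η) * (Real.log (((coveringNumber A (c*ε)).toNat : ℕ) : ℝ)
              / Real.log (1/(c*ε)))) := ENNReal.ofReal_le_ofReal hmain
          _ = ENNReal.ofReal (1+η) * F (c*ε) := by
              rw [ENNReal.ofReal_mul (by linarith)]
      calc limsup h (nhdsWithin (0:ℝ) (Set.Ioi 0))
          ≤ limsup (fun ε : ℝ => ENNReal.ofReal (1+η) * F (c*ε))
            (nhdsWithin (0:ℝ) (Set.Ioi 0)) := limsup_le_limsup hev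
        _ = ENNReal.ofReal (1+η) * limsup (fun ε : ℝ => F (c*ε))
            (nhdsWithin (0:ℝ) (Set.Ioi 0)) :=
            ENNReal.limsup_const_mul_of_ne_top ENNReal.ofReal_ne_top
        _ = ENNReal.ofReal (1+η) * fractalDim A := by rw [hFc]
    have hφ : Tendsto (fun η : ℝ => ENNReal.ofReal (1+η) * fractalDim A)
        (nhdsWithin (0:ℝ) (Set.Ioi 0)) (nhds (fractalDim A)) := by
      have h1 : Tendsto (fun η : ℝ => ENNReal.ofReal (1+η))
          (nhdsWithin (0:ℝ) (Set.Ioi 0)) (nhds 1) := by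
        have hcont : Continuous fun η : ℝ => ENNReal.ofReal (1+η) :=
          ENNReal.continuous_ofReal.comp (continuous_const.add continuous_id)
        have h0 : Tendsto (fun η : ℝ => ENNReal.ofReal (1+η))
            (nhdsWithin (0:ℝ) (Set.Ioi 0)) (nhds (ENNReal.ofReal (1+(0:ℝ)))) :=
          (hcont.tendsto 0).mono_left nhdsWithin_le_nhds
        simpa using h0
      have h2 : Tendsto (fun η : ℝ => ENNReal.ofReal (1+η) * fractalDim A)
          (nhdsWithin (0:ℝ) (Set.Ioi 0)) (nhds (1 * fractalDim A)) :=
        ENNReal.Tendsto.mul_const h1 (Or.inl one_ne_zero)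
      rw [one_mul] at h2
      exact h2
    exact ge_of_tendsto hφ (eventually_nhdsWithin_of_forall fun η hη => hstep η hη)
  -- finish
  calc fractalDim B = limsup f (nhdsWithin (0:ℝ) (Set.Ioi 0)) := hfB
    _ ≤ limsup (fun ε => g ε + h ε) (nhdsWithin (0:ℝ) (Set.Ioi 0)) := hstep2
    _ ≤ limsup g (nhdsWithin (0:ℝ) (Set.Ioi 0)) + limsup h (nhdsWithin (0:ℝ) (Set.Ioi 0)) :=
        hstep3
    _ ≤ ENNReal.ofReal (1/α) + fractalDim A := by
        rw [hg_lim]; exact add_le_add le_rfl hh_lim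
end
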